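/- If φ : ℝ → ℝ is twice differentiable and satisfies φ'' + (3/2)ω φ' + (3/2)φ = 0, then for t > t₀ the function u(t,x,y) = (t-t₀)^{-2} exp(-(x-x₀)²/(4(t-t₀))) · φ(ω), where ω = ((t-t₀)(x+x₀) - 2(y-y₀))/(t-t₀)^{3/2}, satisfies u_t - u_xx + x u_y = 0. -/

import Mathlib

open Real

/-- If φ is twice differentiable and solves φ'' + (3/2)ωφ' + (3/2)φ = 0, then the ansatz
u = (t-t₀)⁻² exp(-(x-x₀)²/(4(t-t₀))) φ(ω), ω = ((t-t₀)(x+x₀)-2(y-y₀))/(t-t₀)^{3/2},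
solves u_t - u_xx + x u_y = 0 for t > t₀. -/
theorem stmt2 (t₀ x₀ y₀ : ℝ) (φ : ℝ → ℝ)
    (hφ1 : Differentiable ℝ φ) (hφ2 : Differentiable ℝ (deriv φ))
    (hode : ∀ ω : ℝ, deriv (deriv φ) ω + 3 / 2 * ω * deriv φ ω + 3 / 2 * φ ω = 0)
    (t x y : ℝ) (ht : t₀ < t) :
    let u : ℝ → ℝ → ℝ → ℝ := fun t x y =>
      ((t - t₀) ^ 2)⁻¹ * Real.exp (-(x - x₀) ^ 2 / (4 * (t - t₀))) *
        φ (((t - t₀) * (x + x₀) - 2 * (y - y₀)) / (t - t₀) ^ ((3 : ℝ) / 2))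
    deriv (fun s => u s x y) t
      - deriv (fun s => deriv (fun r => u t r y) s) x
      + x * deriv (fun s => u t x s) y = 0 := by
  intro u
  have ha : (0:ℝ) < t - t₀ := sub_pos.2 ht
  have hane : t - t₀ ≠ 0 := ha.ne'
  have hppos : (0:ℝ) < (t - t₀) ^ ((3:ℝ)/2) := Real.rpow_pos_of_pos ha _
  have hpne : (t - t₀) ^ ((3:ℝ)/2) ≠ 0 := hppos.ne'
  -- y-derivative
  have hiy : HasDerivAt (fun s : ℝ => ((t - t₀) * (x + x₀) - 2 * (s - y₀)) / (t - t₀) ^ ((3:ℝ)/2))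
      (-2 / (t - t₀) ^ ((3:ℝ)/2)) y :=
    (((((hasDerivAt_id y).sub_const y₀).const_mul (2:ℝ)).const_sub
      ((t - t₀) * (x + x₀))).div_const ((t - t₀) ^ ((3:ℝ)/2))).congr_deriv (by first | ring1 | (simp only [id_eq]; ring1))
  have hy : HasDerivAt (fun s => u t x s) _ y :=
    HasDerivAt.const_mul (((t - t₀) ^ 2)⁻¹ * Real.exp (-(x - x₀) ^ 2 / (4 * (t - t₀))))
      ((hφ1 _).hasDerivAt.comp y hiy)
  -- first x-derivative, at every point r
  have hF : ∀ r : ℝ, HasDerivAt (fun r' => u t r' y)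
      (((t - t₀) ^ 2)⁻¹ * (Real.exp (-(r - x₀) ^ 2 / (4 * (t - t₀))) * (-(2 * (r - x₀)) / (4 * (t - t₀)))) *
          φ (((t - t₀) * (r + x₀) - 2 * (y - y₀)) / (t - t₀) ^ ((3:ℝ)/2))
        + ((t - t₀) ^ 2)⁻¹ * Real.exp (-(r - x₀) ^ 2 / (4 * (t - t₀))) *
          (deriv φ (((t - t₀) * (r + x₀) - 2 * (y - y₀)) / (t - t₀) ^ ((3:ℝ)/2)) *
            ((t - t₀) / (t - t₀) ^ ((3:ℝ)/2)))) r := by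
    intro r
    have hg : HasDerivAt (fun r' : ℝ => -(r' - x₀) ^ 2 / (4 * (t - t₀)))
        (-(2 * (r - x₀)) / (4 * (t - t₀))) r :=
      ((((hasDerivAt_id r).sub_const x₀).pow 2).neg.div_const (4 * (t - t₀))).congr_deriv (by first | ring1 | (simp only [id_eq]; ring1))
    have hw : HasDerivAt (fun r' : ℝ => ((t - t₀) * (r' + x₀) - 2 * (y - y₀)) / (t - t₀) ^ ((3:ℝ)/2))
        ((t - t₀) / (t - t₀) ^ ((3:ℝ)/2)) r :=
      (((((hasDerivAt_id r).add_const x₀).const_mul (t - t₀)).sub_const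
        (2 * (y - y₀))).div_const ((t - t₀) ^ ((3:ℝ)/2))).congr_deriv (by first | ring1 | (simp only [id_eq]; ring1))
    have hφw : HasDerivAt (fun r' : ℝ => φ (((t - t₀) * (r' + x₀) - 2 * (y - y₀)) / (t - t₀) ^ ((3:ℝ)/2)))
        (deriv φ (((t - t₀) * (r + x₀) - 2 * (y - y₀)) / (t - t₀) ^ ((3:ℝ)/2)) *
          ((t - t₀) / (t - t₀) ^ ((3:ℝ)/2))) r :=
      (hφ1 _).hasDerivAt.comp r hw
    exact ((hg.exp.const_mul (((t - t₀) ^ 2)⁻¹)).mul hφw).congr_deriv (by first | ring1 | (simp only [id_eq]; ring1))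
  have hFd : (fun s => deriv (fun r => u t r y) s) =
      (fun r : ℝ => ((t - t₀) ^ 2)⁻¹ * (Real.exp (-(r - x₀) ^ 2 / (4 * (t - t₀))) * (-(2 * (r - x₀)) / (4 * (t - t₀)))) *
          φ (((t - t₀) * (r + x₀) - 2 * (y - y₀)) / (t - t₀) ^ ((3:ℝ)/2))
        + ((t - t₀) ^ 2)⁻¹ * Real.exp (-(r - x₀) ^ 2 / (4 * (t - t₀))) *
          (deriv φ (((t - t₀) * (r + x₀) - 2 * (y - y₀)) / (t - t₀) ^ ((3:ℝ)/2)) *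
            ((t - t₀) / (t - t₀) ^ ((3:ℝ)/2)))) :=
    funext fun s => (hF s).deriv
  -- second x-derivative at x
  have hgx : HasDerivAt (fun r : ℝ => -(r - x₀) ^ 2 / (4 * (t - t₀)))
      (-(2 * (x - x₀)) / (4 * (t - t₀))) x :=
    ((((hasDerivAt_id x).sub_const x₀).pow 2).neg.div_const (4 * (t - t₀))).congr_deriv (by first | ring1 | (simp only [id_eq]; ring1))
  have hwx : HasDerivAt (fun r : ℝ => ((t - t₀) * (r + x₀) - 2 * (y - y₀)) / (t - t₀) ^ ((3:ℝ)/2))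
      ((t - t₀) / (t - t₀) ^ ((3:ℝ)/2)) x :=
    (((((hasDerivAt_id x).add_const x₀).const_mul (t - t₀)).sub_const
      (2 * (y - y₀))).div_const ((t - t₀) ^ ((3:ℝ)/2))).congr_deriv (by first | ring1 | (simp only [id_eq]; ring1))
  have hφwx : HasDerivAt (fun r : ℝ => φ (((t - t₀) * (r + x₀) - 2 * (y - y₀)) / (t - t₀) ^ ((3:ℝ)/2)))
      (deriv φ (((t - t₀) * (x + x₀) - 2 * (y - y₀)) / (t - t₀) ^ ((3:ℝ)/2)) *
        ((t - t₀) / (t - t₀) ^ ((3:ℝ)/2))) x :=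
    (hφ1 _).hasDerivAt.comp x hwx
  have hφ'wx : HasDerivAt (fun r : ℝ => deriv φ (((t - t₀) * (r + x₀) - 2 * (y - y₀)) / (t - t₀) ^ ((3:ℝ)/2)))
      (deriv (deriv φ) (((t - t₀) * (x + x₀) - 2 * (y - y₀)) / (t - t₀) ^ ((3:ℝ)/2)) *
        ((t - t₀) / (t - t₀) ^ ((3:ℝ)/2))) x :=
    (hφ2 _).hasDerivAt.comp x hwx
  have hAx : HasDerivAt (fun r : ℝ => -(2 * (r - x₀)) / (4 * (t - t₀)))
      (-2 / (4 * (t - t₀))) x :=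
    ((((hasDerivAt_id x).sub_const x₀).const_mul (2:ℝ)).neg.div_const (4 * (t - t₀))).congr_deriv (by first | ring1 | (simp only [id_eq]; ring1))
  have hD : HasDerivAt
      (fun r : ℝ => ((t - t₀) ^ 2)⁻¹ * (Real.exp (-(r - x₀) ^ 2 / (4 * (t - t₀))) * (-(2 * (r - x₀)) / (4 * (t - t₀)))) *
          φ (((t - t₀) * (r + x₀) - 2 * (y - y₀)) / (t - t₀) ^ ((3:ℝ)/2))
        + ((t - t₀) ^ 2)⁻¹ * Real.exp (-(r - x₀) ^ 2 / (4 * (t - t₀))) *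
          (deriv φ (((t - t₀) * (r + x₀) - 2 * (y - y₀)) / (t - t₀) ^ ((3:ℝ)/2)) *
            ((t - t₀) / (t - t₀) ^ ((3:ℝ)/2)))) _ x :=
    (((hgx.exp.mul hAx).const_mul (((t - t₀) ^ 2)⁻¹)).mul hφwx).add
      ((hgx.exp.const_mul (((t - t₀) ^ 2)⁻¹)).mul
        (hφ'wx.mul_const ((t - t₀) / (t - t₀) ^ ((3:ℝ)/2))))
  -- t-derivative at t
  have h1t : HasDerivAt (fun s : ℝ => ((s - t₀) ^ 2)⁻¹) _ t :=
    (((hasDerivAt_id t).sub_const t₀).pow 2).inv (pow_ne_zero 2 hane)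
  have h2t : HasDerivAt (fun s : ℝ => Real.exp (-(x - x₀) ^ 2 / (4 * (s - t₀)))) _ t :=
    ((hasDerivAt_const t (-(x - x₀) ^ 2)).div
      (((hasDerivAt_id t).sub_const t₀).const_mul 4) (by positivity)).exp
  have hPt : HasDerivAt (fun s : ℝ => (s - t₀) ^ ((3:ℝ)/2))
      (3 / 2 * (t - t₀) ^ ((1:ℝ)/2)) t := by
    have h := (Real.hasDerivAt_rpow_const (x := t - t₀) (p := (3:ℝ)/2) (Or.inl hane)).comp t
      ((hasDerivAt_id t).sub_const t₀)
    have : ((3:ℝ)/2 - 1) = (1:ℝ)/2 := by norm_num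
    simpa [this, Function.comp_def] using h
  have hωt : HasDerivAt (fun s : ℝ => ((s - t₀) * (x + x₀) - 2 * (y - y₀)) / (s - t₀) ^ ((3:ℝ)/2)) _ t :=
    ((((hasDerivAt_id t).sub_const t₀).mul_const (x + x₀)).sub_const (2 * (y - y₀))).div hPt hpne
  have hφωt : HasDerivAt (fun s : ℝ => φ (((s - t₀) * (x + x₀) - 2 * (y - y₀)) / (s - t₀) ^ ((3:ℝ)/2))) _ t :=
    (hφ1 _).hasDerivAt.comp t hωt
  have hT : HasDerivAt (fun s => u s x y) _ t := (h1t.mul h2t).mul hφωt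
  rw [hT.deriv, hFd, hD.deriv, hy.deriv]
  set q : ℝ := (t - t₀) ^ ((1:ℝ)/2) with hqdef
  have hq0 : 0 < q := Real.rpow_pos_of_pos ha _
  have hdd : deriv (deriv φ) (((t - t₀) * (x + x₀) - 2 * (y - y₀)) / (t - t₀) ^ ((3:ℝ)/2)) =
      -(3 / 2 * ((((t - t₀) * (x + x₀) - 2 * (y - y₀)) / (t - t₀) ^ ((3:ℝ)/2))) *
        deriv φ (((t - t₀) * (x + x₀) - 2 * (y - y₀)) / (t - t₀) ^ ((3:ℝ)/2))) -
      3 / 2 * φ (((t - t₀) * (x + x₀) - 2 * (y - y₀)) / (t - t₀) ^ ((3:ℝ)/2)) := by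
    linarith [hode (((t - t₀) * (x + x₀) - 2 * (y - y₀)) / (t - t₀) ^ ((3:ℝ)/2))]
  have hqq : (t - t₀) ^ ((3:ℝ)/2) = q ^ 3 := by
    rw [hqdef, ← Real.rpow_natCast ((t - t₀) ^ ((1:ℝ)/2)) 3, ← Real.rpow_mul ha.le]
    norm_num
  have ha2 : t - t₀ = q ^ 2 := by
    rw [hqdef, ← Real.rpow_natCast ((t - t₀) ^ ((1:ℝ)/2)) 2, ← Real.rpow_mul ha.le]
    norm_num
  simp only [id_eq, Pi.mul_apply, Pi.pow_apply, Pi.inv_apply, Pi.div_apply]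
  rw [hdd, hqq, ha2]
  have hEne : Real.exp (-(x - x₀) ^ 2 / (4 * q ^ 2)) ≠ 0 := Real.exp_ne_zero _
  field_simp
  ring
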